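/- Let E be a real locally convex topological vector space with dual E*, and T : E ⇉ E*. Then T is monotone if and only if for every x* ∈ E*, the translated operator x ↦ T(x) − x* is quasimonotone. -/

import Mathlib

/-- `T` is monotone iff for every `x* ∈ E*` the translated operator `x ↦ T x - x*`
is quasimonotone. -/
theorem monotone_iff_translates_quasimonotone {E : Type*} [AddCommGroup E] [Module ℝ E]
    [TopologicalSpace E] [IsTopologicalAddGroup E] [ContinuousSMul ℝ E]
    [LocallyConvexSpace ℝ E] [T2Space E]
    (T : E → Set (E →L[ℝ] ℝ)) :
    (∀ x y (x' y' : E →L[ℝ] ℝ), x' ∈ T x → y' ∈ T y → 0 ≤ (y' - x') (y - x)) ↔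
    (∀ z : E →L[ℝ] ℝ, ∀ x y (x' y' : E →L[ℝ] ℝ), x' ∈ T x → y' ∈ T y →
      0 ≤ max ((x' - z) (x - y)) ((y' - z) (y - x))) := by
  constructor
  · intro h z x y x' y' hx hy
    have h0 := h x y x' y' hx hy
    have hsum : (x' - z) (x - y) + (y' - z) (y - x) = (y' - x') (y - x) := by
      simp only [ContinuousLinearMap.sub_apply, map_sub]
      ring
    by_contra hc
    push_neg at hc
    have h1 : (x' - z) (x - y) < 0 := (max_lt_iff.mp hc).1
    have h2 : (y' - z) (y - x) < 0 := (max_lt_iff.mp hc).2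
    linarith [hsum ▸ h0]
  · intro h x y x' y' hx hy
    by_contra hc
    push_neg at hc
    have hxy : x - y ≠ 0 := by
      intro h0
      have hx0 : x = y := sub_eq_zero.mp h0
      rw [hx0, sub_self] at hc
      simp at hc
    obtain ⟨f, hf⟩ := SeparatingDual.exists_eq_one (R := ℝ) hxy
    have hyx : y - x = -(x - y) := (neg_sub x y).symm
    have key : (y' - x') (y - x) = x' (x - y) - y' (x - y) := by
      rw [hyx]
      simp only [ContinuousLinearMap.sub_apply, map_sub, map_neg]
      ring
    set c : ℝ := (x' (x - y) + y' (x - y)) / 2 with hc'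
    have hlt : x' (x - y) < y' (x - y) := by rw [key] at hc; linarith
    have h1 : x' (x - y) < c := by rw [hc']; linarith
    have h2 : c < y' (x - y) := by rw [hc']; linarith
    have hm := h (c • f) x y x' y' hx hy
    have e1 : (x' - c • f) (x - y) = x' (x - y) - c := by
      simp only [ContinuousLinearMap.sub_apply, ContinuousLinearMap.smul_apply, hf,
        smul_eq_mul, mul_one]
    have e2 : (y' - c • f) (y - x) = -(y' (x - y)) + c := by
      rw [hyx]
      simp only [ContinuousLinearMap.sub_apply, ContinuousLinearMap.smul_apply, map_neg, hf,
        smul_eq_mul, mul_neg, mul_one]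
      ring
    rw [e1, e2] at hm
    rcases le_max_iff.mp hm with h3 | h3 <;> linarith
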